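/- Let n ≥ 3 be odd and let G be the complete cycle digraph on n nodes (a directed path v_1 → v_2 → ... → v_n together with arcs from every node to v_1, including the self-loop at v_1). Then the majority Boolean automata network A_G solves the density classification task: every configuration with a strict majority of 1s converges under iteration to the all-ones configuration, and every configuration with a strict majority of 0s converges to the all-zeros configuration. -/

import Mathlib

/-- Number of `true` entries of `x` inside the finite set `S`. -/
def onesIn {V : Type*} [DecidableEq V] (S : Finset V) (x : V → Bool) : ℕ :=
  (S.filter (fun v => x v = true)).card

/-- Total number of ones in a configuration. -/
def ones {V : Type*} [Fintype V] [DecidableEq V] (x : V → Bool) : ℕ :=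
  onesIn Finset.univ x

/-- Total number of zeros in a configuration. -/
def zeros {V : Type*} [Fintype V] [DecidableEq V] (x : V → Bool) : ℕ :=
  (Finset.univ.filter (fun v => x v = false)).card

/-- One synchronous step of the majority Boolean automata network with
in-neighborhoods `N`: each node takes the majority state among its
in-neighbors, keeping its current state in case of a tie. -/
def majStep {V : Type*} [Fintype V] [DecidableEq V]
    (N : V → Finset V) (x : V → Bool) : V → Bool :=
  fun v =>
    if (N v).card < 2 * onesIn (N v) x then true
    else if 2 * onesIn (N v) x < (N v).card then false
    else x v

/-- In-neighborhoods of the complete cycle digraph: node 0 sees everyone,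
node i (i ≥ 1) sees only node i-1. -/
def ccN (n : ℕ) (v : Fin n) : Finset (Fin n) :=
  if v.val = 0 then Finset.univ
  else Finset.univ.filter (fun u => u.val = v.val - 1)

lemma ones_add_zeros {n : ℕ} (x : Fin n → Bool) : ones x + zeros x = n := by
  unfold ones zeros onesIn
  have : (Finset.univ.filter (fun v => x v = false)) =
      (Finset.univ.filter (fun v => ¬ (x v = true))) := by
    apply Finset.filter_congr; intro v _; simp
  rw [this, Finset.card_filter_add_card_filter_not, Finset.card_univ, Fintype.card_fin]

lemma step_eq {n : ℕ} (hn : Odd n) (x : Fin n → Bool) (v : Fin n) :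
    majStep (ccN n) x v =
      if h : v.val = 0 then decide (n < 2 * ones x)
      else x ⟨v.val - 1, Nat.lt_of_le_of_lt (Nat.sub_le _ _) v.isLt⟩ := by
  by_cases h : v.val = 0
  · have hN : ccN n v = Finset.univ := by simp [ccN, h]
    have hcard : (ccN n v).card = n := by rw [hN, Finset.card_univ, Fintype.card_fin]
    have hones : onesIn (ccN n v) x = ones x := by rw [hN]; rfl
    have hne : n ≠ 2 * ones x := by
      intro he; exact (Nat.not_even_iff_odd.mpr hn) ⟨ones x, by omega⟩
    rw [dif_pos h]
    unfold majStep
    rw [hcard, hones]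
    by_cases hlt : n < 2 * ones x
    · simp [hlt]
    · rw [if_neg hlt, if_pos (by omega)]
      simp; omega
  · set p : Fin n := ⟨v.val - 1, Nat.lt_of_le_of_lt (Nat.sub_le _ _) v.isLt⟩ with hp
    have hN : ccN n v = {p} := by
      ext u
      simp [ccN, h, Fin.ext_iff, hp]
    rw [dif_neg h]
    unfold majStep
    rw [hN, Finset.card_singleton]
    unfold onesIn
    by_cases hx : x p = true
    · rw [Finset.filter_singleton, if_pos hx, Finset.card_singleton, if_pos (by omega), hx]
    · rw [Finset.filter_singleton, if_neg hx, Finset.card_empty,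
        if_neg (by omega), if_pos (by omega)]
      simp at hx; exact hx.symm

lemma ones_le_step {n : ℕ} (hn : Odd n) (x : Fin n → Bool) (hmaj : n < 2 * ones x) :
    ones x ≤ ones (majStep (ccN n) x) := by
  have hn0 : 0 < n := by have := Nat.odd_iff.mp hn; omega
  unfold ones onesIn
  apply Finset.card_le_card_of_injOn
    (fun v => if hv : v.val + 1 < n then (⟨v.val + 1, hv⟩ : Fin n) else ⟨0, hn0⟩)
  · intro v hv
    simp only [Finset.coe_filter, Finset.mem_coe, Finset.mem_filter, Finset.mem_univ, true_and, Set.mem_setOf_eq] at hv ⊢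
    by_cases hv1 : v.val + 1 < n
    · rw [dif_pos hv1, step_eq hn, dif_neg (by simp)]
      simpa using hv
    · rw [dif_neg hv1, step_eq hn, dif_pos rfl]
      simpa using hmaj
  · intro a _ b _ hab
    by_cases ha : a.val + 1 < n <;> by_cases hb : b.val + 1 < n <;>
      simp [ha, hb, Fin.ext_iff] at hab ⊢ <;> omega

lemma maj_iterate {n : ℕ} (hn : Odd n) (x : Fin n → Bool) (hmaj : n < 2 * ones x) (t : ℕ) :
    n < 2 * ones ((majStep (ccN n))^[t] x) := by
  induction t with
  | zero => exact hmaj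
  | succ t ih =>
    rw [Function.iterate_succ_apply']
    exact lt_of_lt_of_le ih (Nat.mul_le_mul_left 2 (ones_le_step hn _ ih))

lemma iter_true {n : ℕ} (hn : Odd n) (x : Fin n → Bool) (hmaj : n < 2 * ones x) :
    ∀ t (v : Fin n), v.val < t → (majStep (ccN n))^[t] x v = true := by
  intro t
  induction t with
  | zero => intro v hv; omega
  | succ t ih =>
    intro v hv
    rw [Function.iterate_succ_apply', step_eq hn]
    by_cases h : v.val = 0
    · rw [dif_pos h]
      simpa using maj_iterate hn x hmaj t
    · rw [dif_neg h]
      exact ih _ (by simp; omega)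

lemma onesIn_not {V : Type*} [DecidableEq V] (S : Finset V) (x : V → Bool) :
    onesIn S (fun v => !x v) = S.card - onesIn S x := by
  unfold onesIn
  have : S.filter (fun v => (!x v) = true) = S.filter (fun v => ¬ (x v = true)) := by
    apply Finset.filter_congr; intro v _; simp
  rw [this, ← Finset.card_filter_add_card_filter_not (s := S) (p := fun v => x v = true)]
  omega

lemma majStep_not {V : Type*} [Fintype V] [DecidableEq V] (N : V → Finset V) (x : V → Bool) :
    majStep N (fun v => !x v) = fun v => !(majStep N x v) := by
  funext v
  have hle : onesIn (N v) x ≤ (N v).card := Finset.card_le_card (Finset.filter_subset _ _)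
  unfold majStep
  rw [onesIn_not]
  by_cases h1 : (N v).card < 2 * onesIn (N v) x
  · rw [if_neg (by omega), if_pos (by omega), if_pos h1]; rfl
  · by_cases h2 : 2 * onesIn (N v) x < (N v).card
    · rw [if_pos (by omega), if_neg h1, if_pos h2]; rfl
    · rw [if_neg (by omega), if_neg (by omega), if_neg h1, if_neg h2]

lemma iterate_not {V : Type*} [Fintype V] [DecidableEq V] (N : V → Finset V)
    (x : V → Bool) (t : ℕ) :
    (majStep N)^[t] (fun v => !x v) = fun v => !((majStep N)^[t] x v) := by
  induction t with
  | zero => rfl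
  | succ t ih => rw [Function.iterate_succ_apply', Function.iterate_succ_apply', ih, majStep_not]

lemma ones_not {n : ℕ} (x : Fin n → Bool) : ones (fun v => !x v) = zeros x := by
  unfold ones zeros onesIn
  congr 1
  apply Finset.filter_congr; intro v _; simp

lemma zeros_not {n : ℕ} (x : Fin n → Bool) : zeros (fun v => !x v) = ones x := by
  unfold ones zeros onesIn
  congr 1
  apply Finset.filter_congr; intro v _; simp

/-- the complete cycle majority network solves DCT. -/
theorem stmt3 (n : ℕ) (hn : Odd n) (h3 : 3 ≤ n) :
    (∀ x : Fin n → Bool, zeros x < ones x →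
      ∃ t : ℕ, (majStep (ccN n))^[t] x = fun _ => true) ∧
    (∀ x : Fin n → Bool, ones x < zeros x →
      ∃ t : ℕ, (majStep (ccN n))^[t] x = fun _ => false) := by
  have key : ∀ x : Fin n → Bool, zeros x < ones x →
      (majStep (ccN n))^[n] x = fun _ => true := by
    intro x hx
    have hmaj : n < 2 * ones x := by have := ones_add_zeros x; omega
    funext v
    exact iter_true hn x hmaj n v v.isLt
  constructor
  · intro x hx
    exact ⟨n, key x hx⟩
  · intro x hx
    refine ⟨n, ?_⟩
    have hx' : zeros (fun v => !x v) < ones (fun v => !x v) := by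
      rw [ones_not, zeros_not]; exact hx
    have h := key _ hx'
    rw [iterate_not] at h
    funext v
    have := congrFun h v
    simp at this
    simp [this]
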